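/- If f(x) = (1/2)x'Qx + q'x with Q symmetric positive semidefinite, μ_f = λ_min(Q), L_f = λ_max(Q), and γ ∈ (0, 1/L_f), then F_γ is strongly convex with modulus min{(1-γμ_f)μ_f, (1-γL_f)L_f} and ∇F_γ is Lipschitz continuous with constant 2(1-γμ_f)/γ. -/

import Mathlib

open scoped RealInnerProductSpace
open Filter Topology

noncomputable section

abbrev Eucl (n : ℕ) := EuclideanSpace ℝ (Fin n)

/-- `p` is the proximal mapping of `g` with parameter `γ`:
`p x` minimizes `u ↦ g u + ‖u - x‖² / (2γ)`. -/
def IsProx {n : ℕ} (γ : ℝ) (g : Eucl n → EReal) (p : Eucl n → Eucl n) : Prop :=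
  ∀ x u, g (p x) + ((‖p x - x‖ ^ 2 / (2 * γ) : ℝ) : EReal)
        ≤ g u + ((‖u - x‖ ^ 2 / (2 * γ) : ℝ) : EReal)

/-- `g` is proper, lower semicontinuous and convex (with values in `ℝ ∪ {+∞}`). -/
def ProperLscConvex {n : ℕ} (g : Eucl n → EReal) : Prop :=
  (∃ x, g x ≠ ⊤) ∧ (∀ x, g x ≠ ⊥) ∧ LowerSemicontinuous g ∧
  (∀ x y : Eucl n, ∀ a b : ℝ, 0 ≤ a → 0 ≤ b → a + b = 1 →
    g (a • x + b • y) ≤ (a : EReal) * g x + (b : EReal) * g y)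



/-- Cauchy–Schwarz trick for psd symmetric operators. -/
lemma psd_norm_sq_le {n : ℕ} (A : Eucl n →L[ℝ] Eucl n)
    (hs : ∀ u v : Eucl n, ⟪A u, v⟫ = ⟪u, A v⟫)
    (h0 : ∀ x : Eucl n, 0 ≤ ⟪A x, x⟫) (M : ℝ)
    (hM : ∀ x : Eucl n, ⟪A x, x⟫ ≤ M * ‖x‖ ^ 2)
    (x : Eucl n) : ‖A x‖ ^ 2 ≤ M * ⟪A x, x⟫ := by
  have key : ∀ u v : Eucl n, ⟪A u, v⟫ ^ 2 ≤ ⟪A u, u⟫ * ⟪A v, v⟫ := by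
    intro u v
    have hquad : ∀ t : ℝ, 0 ≤ ⟪A v, v⟫ * (t * t) + (2 * ⟪A u, v⟫) * t + ⟪A u, u⟫ := by
      intro t
      have h := h0 (u + t • v)
      have hexp : ⟪A (u + t • v), u + t • v⟫
          = ⟪A v, v⟫ * (t * t) + (2 * ⟪A u, v⟫) * t + ⟪A u, u⟫ := by
        have h1 : ⟪A v, u⟫ = ⟪A u, v⟫ := by rw [hs v u, real_inner_comm]
        simp only [map_add, map_smul, inner_add_left, inner_add_right,
          real_inner_smul_left, real_inner_smul_right, h1]
        ring
      linarith [hexp ▸ h]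
    have hd := discrim_le_zero hquad
    rw [discrim] at hd
    nlinarith [hd]
  have k1 := key x (A x)
  have k2 := hM (A x)
  have hAx : ⟪A x, A x⟫ = ‖A x‖ ^ 2 := real_inner_self_eq_norm_sq _
  rw [hAx] at k1
  rcases eq_or_ne (‖A x‖) 0 with h | h
  · have hz : A x = 0 := norm_eq_zero.mp h
    simp [hz]
  · have hpos : 0 < ‖A x‖ ^ 2 := by positivity
    nlinarith [h0 x, k1, k2, hpos]

lemma modulus_bound {n : ℕ} (Q : Eucl n →L[ℝ] Eucl n) (μ L γ : ℝ)
    (hQsymm : ∀ u v : Eucl n, ⟪Q u, v⟫ = ⟪u, Q v⟫)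
    (hμ : ∀ x : Eucl n, μ * ‖x‖ ^ 2 ≤ ⟪Q x, x⟫)
    (hL : ∀ x : Eucl n, ⟪Q x, x⟫ ≤ L * ‖x‖ ^ 2)
    (hγ0 : 0 ≤ γ) (x : Eucl n) :
    min ((1 - γ * μ) * μ) ((1 - γ * L) * L) * ‖x‖ ^ 2 ≤ ⟪Q x, x⟫ - γ * ‖Q x‖ ^ 2 := by
  set A : Eucl n →L[ℝ] Eucl n := Q - μ • ContinuousLinearMap.id ℝ (Eucl n) with hA
  have hAapp : ∀ y : Eucl n, A y = Q y - μ • y := by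
    intro y; simp [hA]
  have hAs : ∀ u v : Eucl n, ⟪A u, v⟫ = ⟪u, A v⟫ := by
    intro u v
    simp only [hAapp, inner_sub_left, inner_sub_right, real_inner_smul_left,
      real_inner_smul_right, hQsymm]
  have hinner : ∀ y : Eucl n, ⟪A y, y⟫ = ⟪Q y, y⟫ - μ * ‖y‖ ^ 2 := by
    intro y
    rw [hAapp, inner_sub_left, real_inner_smul_left, real_inner_self_eq_norm_sq]
  have h0 : ∀ y : Eucl n, 0 ≤ ⟪A y, y⟫ := fun y => by rw [hinner]; linarith [hμ y]
  have hM : ∀ y : Eucl n, ⟪A y, y⟫ ≤ (L - μ) * ‖y‖ ^ 2 := fun y => by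
    rw [hinner]; linarith [hL y]
  have key := psd_norm_sq_le A hAs h0 (L - μ) hM x
  rw [hinner] at key
  have hexp : ‖A x‖ ^ 2 = ‖Q x‖ ^ 2 - 2 * μ * ⟪Q x, x⟫ + μ ^ 2 * ‖x‖ ^ 2 := by
    rw [hAapp, norm_sub_sq_real, real_inner_smul_right, norm_smul]
    simp [Real.norm_eq_abs, mul_pow, sq_abs]
    ring
  have hNX : ‖Q x‖ ^ 2 ≤ (L + μ) * ⟪Q x, x⟫ - μ * L * ‖x‖ ^ 2 := by nlinarith [key, hexp]
  rcases le_total (γ * (μ + L)) 1 with h1 | h1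
  · have e1 : 0 ≤ (1 - γ * (μ + L)) * (⟪Q x, x⟫ - μ * ‖x‖ ^ 2) :=
      mul_nonneg (by linarith) (by linarith [hμ x])
    have e2 : γ * ‖Q x‖ ^ 2 ≤ γ * ((L + μ) * ⟪Q x, x⟫ - μ * L * ‖x‖ ^ 2) :=
      mul_le_mul_of_nonneg_left hNX hγ0
    have e3 : min ((1 - γ * μ) * μ) ((1 - γ * L) * L) * ‖x‖ ^ 2 ≤ (1 - γ * μ) * μ * ‖x‖ ^ 2 :=
      mul_le_mul_of_nonneg_right (min_le_left _ _) (sq_nonneg _)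
    nlinarith [e1, e2, e3]
  · have e1 : 0 ≤ (γ * (μ + L) - 1) * (L * ‖x‖ ^ 2 - ⟪Q x, x⟫) :=
      mul_nonneg (by linarith) (by linarith [hL x])
    have e2 : γ * ‖Q x‖ ^ 2 ≤ γ * ((L + μ) * ⟪Q x, x⟫ - μ * L * ‖x‖ ^ 2) :=
      mul_le_mul_of_nonneg_left hNX hγ0
    have e3 : min ((1 - γ * μ) * μ) ((1 - γ * L) * L) * ‖x‖ ^ 2 ≤ (1 - γ * L) * L * ‖x‖ ^ 2 :=
      mul_le_mul_of_nonneg_right (min_le_right _ _) (sq_nonneg _)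
    nlinarith [e1, e2, e3]

lemma g_coe {n : ℕ} {g : Eucl n → EReal} (hgb : ∀ x, g x ≠ ⊥) {u : Eucl n} (hu : g u ≠ ⊤) :
    g u = ((g u).toReal : EReal) := (EReal.coe_toReal hu (hgb u)).symm

/-- real version of the prox inequality -/
lemma prox_real {n : ℕ} {g : Eucl n → EReal} {γ : ℝ} {p : Eucl n → Eucl n}
    (hgb : ∀ x, g x ≠ ⊥) (hp : IsProx γ g p) (hfin : ∀ y, g (p y) ≠ ⊤)
    (y u : Eucl n) (hu : g u ≠ ⊤) :
    (g (p y)).toReal + ‖p y - y‖ ^ 2 / (2 * γ) ≤ (g u).toReal + ‖u - y‖ ^ 2 / (2 * γ) := by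
  have h := hp y u
  rw [g_coe hgb (hfin y), g_coe hgb hu, ← EReal.coe_add, ← EReal.coe_add] at h
  exact_mod_cast h

/-- real version of convexity of g -/
lemma g_conv_real {n : ℕ} {g : Eucl n → EReal} (hg : ProperLscConvex g)
    {x y : Eucl n} (hx : g x ≠ ⊤) (hy : g y ≠ ⊤) {a b : ℝ}
    (ha : 0 ≤ a) (hb : 0 ≤ b) (hab : a + b = 1) :
    g (a • x + b • y) ≠ ⊤ ∧
      (g (a • x + b • y)).toReal ≤ a * (g x).toReal + b * (g y).toReal := by
  obtain ⟨-, hgb, -, hconv⟩ := hg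
  have h := hconv x y a b ha hb hab
  rw [g_coe hgb hx, g_coe hgb hy, ← EReal.coe_mul, ← EReal.coe_mul, ← EReal.coe_add] at h
  have hne : g (a • x + b • y) ≠ ⊤ := ne_top_of_le_ne_top (EReal.coe_ne_top _) h
  refine ⟨hne, ?_⟩
  have := EReal.toReal_le_toReal h (hgb _) (EReal.coe_ne_top _)
  rwa [EReal.toReal_coe] at this

lemma limit_aux {C D : ℝ} (hD0 : 0 ≤ D)
    (key : ∀ t : ℝ, 0 < t → t ≤ 1 → 0 ≤ C + t * D) : 0 ≤ C := by
  by_contra hC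
  push_neg at hC
  have ht0 : 0 < min 1 (-C / (2 * (D + 1))) :=
    lt_min one_pos (div_pos (by linarith) (by linarith))
  have h1 : min 1 (-C / (2 * (D + 1))) ≤ -C / (2 * (D + 1)) := min_le_right _ _
  have h2 : min 1 (-C / (2 * (D + 1))) * D ≤ (-C / (2 * (D + 1))) * D :=
    mul_le_mul_of_nonneg_right h1 hD0
  have h3 : (-C / (2 * (D + 1))) * D ≤ -C / 2 := by
    rw [div_mul_eq_mul_div, div_le_div_iff₀ (by linarith) (by norm_num)]
    nlinarith
  have := key _ ht0 (min_le_left _ _)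
  linarith

/-- subgradient inequality at the prox point -/
lemma prox_subgrad {n : ℕ} {g : Eucl n → EReal} {γ : ℝ} {p : Eucl n → Eucl n}
    (hg : ProperLscConvex g) (hγ : 0 < γ) (hp : IsProx γ g p) (hfin : ∀ y, g (p y) ≠ ⊤)
    (y u : Eucl n) (hu : g u ≠ ⊤) :
    ⟪y - p y, u - p y⟫ ≤ γ * ((g u).toReal - (g (p y)).toReal) := by
  have hgb := hg.2.1
  set I : ℝ := ⟪p y - y, u - p y⟫ with hI
  set N : ℝ := ‖u - p y‖ ^ 2 with hN
  have hN0 : 0 ≤ N := by rw [hN]; positivity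
  have key : ∀ t : ℝ, 0 < t → t ≤ 1 →
      0 ≤ ((g u).toReal - (g (p y)).toReal + I / γ) + t * (N / (2 * γ)) := by
    intro t ht0 ht1
    have hcomb : p y + t • (u - p y) = (1 - t) • (p y) + t • u := by
      rw [smul_sub]; module
    have hgut := g_conv_real hg (x := p y) (y := u) (a := 1 - t) (b := t)
      (hfin y) hu (by linarith) ht0.le (by ring)
    rw [← hcomb] at hgut
    have h2 := prox_real hgb hp hfin y (p y + t • (u - p y)) hgut.1
    have hdiff : p y + t • (u - p y) - y = (p y - y) + t • (u - p y) := by abel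
    have hnorm : ‖p y + t • (u - p y) - y‖ ^ 2 / (2 * γ)
        = ‖p y - y‖ ^ 2 / (2 * γ) + t * (I / γ) + t ^ 2 * (N / (2 * γ)) := by
      rw [hdiff, norm_add_sq_real, real_inner_smul_right, norm_smul,
        Real.norm_eq_abs, mul_pow, sq_abs, ← hI, ← hN]
      ring
    rw [hnorm] at h2
    have hE : 0 ≤ t * (((g u).toReal - (g (p y)).toReal + I / γ) + t * (N / (2 * γ))) := by
      nlinarith [h2, hgut.2]
    have hE2 := div_nonneg hE ht0.le
    rw [mul_div_cancel_left₀ _ ht0.ne'] at hE2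
    linarith [hE2]
  have hC : 0 ≤ (g u).toReal - (g (p y)).toReal + I / γ :=
    limit_aux (by positivity) key
  -- conclude
  have hIy : ⟪y - p y, u - p y⟫ = -I := by
    rw [hI, show y - p y = -(p y - y) by abel, inner_neg_left]
  have hγC := mul_nonneg hγ.le hC
  have hfield : γ * (I / γ) = I := by field_simp
  nlinarith [hγC, hfield]

lemma prox_firm {n : ℕ} {g : Eucl n → EReal} {γ : ℝ} {p : Eucl n → Eucl n}
    (hg : ProperLscConvex g) (hγ : 0 < γ) (hp : IsProx γ g p) (hfin : ∀ y, g (p y) ≠ ⊤)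
    (y z : Eucl n) : ‖p y - p z‖ ^ 2 ≤ ⟪y - z, p y - p z⟫ := by
  have h1 := prox_subgrad hg hγ hp hfin y (p z) (hfin z)
  have h2 := prox_subgrad hg hγ hp hfin z (p y) (hfin y)
  have hadd : ⟪y - p y, p z - p y⟫ + ⟪z - p z, p y - p z⟫ ≤ 0 := by linarith
  have e1 : ⟪y - p y, p z - p y⟫ = -⟪y - p y, p y - p z⟫ := by
    rw [show p z - p y = -(p y - p z) by abel, inner_neg_right]
  have e2 : ⟪y - p y, p y - p z⟫ = ⟪y, p y - p z⟫ - ⟪p y, p y - p z⟫ := inner_sub_left _ _ _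
  have e3 : ⟪z - p z, p y - p z⟫ = ⟪z, p y - p z⟫ - ⟪p z, p y - p z⟫ := inner_sub_left _ _ _
  have e4 : ⟪y - z, p y - p z⟫ = ⟪y, p y - p z⟫ - ⟪z, p y - p z⟫ := inner_sub_left _ _ _
  have e5 : ⟪p y - p z, p y - p z⟫ = ⟪p y, p y - p z⟫ - ⟪p z, p y - p z⟫ := inner_sub_left _ _ _
  have e6 : ⟪p y - p z, p y - p z⟫ = ‖p y - p z‖ ^ 2 := real_inner_self_eq_norm_sq _
  linarith

lemma prox_nonexpansive {n : ℕ} {g : Eucl n → EReal} {γ : ℝ} {p : Eucl n → Eucl n}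
    (hg : ProperLscConvex g) (hγ : 0 < γ) (hp : IsProx γ g p) (hfin : ∀ y, g (p y) ≠ ⊤)
    (y z : Eucl n) : ‖p y - p z‖ ≤ ‖y - z‖ := by
  have h1 := prox_firm hg hγ hp hfin y z
  have h2 := real_inner_le_norm (y - z) (p y - p z)
  nlinarith [norm_nonneg (p y - p z), norm_nonneg (y - z)]

/-- convex combination of squared norms -/
lemma norm_comb {n : ℕ} (u v : Eucl n) (a b : ℝ) (hab : a + b = 1) :
    ‖a • u + b • v‖ ^ 2 = a * ‖u‖ ^ 2 + b * ‖v‖ ^ 2 - a * b * ‖u - v‖ ^ 2 := by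
  have hb : b = 1 - a := by linarith
  subst hb
  have h1 : ⟪v, u⟫ = ⟪u, v⟫ := real_inner_comm _ _
  rw [← real_inner_self_eq_norm_sq, ← real_inner_self_eq_norm_sq,
    ← real_inner_self_eq_norm_sq, ← real_inner_self_eq_norm_sq]
  simp only [inner_add_left, inner_add_right, inner_sub_left, inner_sub_right,
    real_inner_smul_left, real_inner_smul_right, h1]
  ring

/-- upper quadratic bound on the Moreau envelope -/
lemma env_upper {n : ℕ} {g : Eucl n → EReal} {γ : ℝ} {p : Eucl n → Eucl n}
    (hgb : ∀ x, g x ≠ ⊥) (hγ : 0 < γ) (hp : IsProx γ g p) (hfin : ∀ y, g (p y) ≠ ⊤)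
    (y z : Eucl n) :
    (g (p z)).toReal + ‖p z - z‖ ^ 2 / (2 * γ)
      ≤ (g (p y)).toReal + ‖p y - y‖ ^ 2 / (2 * γ)
        + ⟪(1 / γ) • (y - p y), z - y⟫ + ‖z - y‖ ^ 2 / (2 * γ) := by
  have h := prox_real hgb hp hfin z (p y) (hfin y)
  have hdec : p y - z = (p y - y) + (y - z) := by abel
  have hnorm : ‖p y - z‖ ^ 2 / (2 * γ)
      = ‖p y - y‖ ^ 2 / (2 * γ) + (1 / γ) * ⟪p y - y, y - z⟫ + ‖y - z‖ ^ 2 / (2 * γ) := by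
    rw [hdec, norm_add_sq_real]
    ring
  have hi : ⟪(1 / γ) • (y - p y), z - y⟫ = (1 / γ) * ⟪p y - y, y - z⟫ := by
    rw [real_inner_smul_left, show y - p y = -(p y - y) by abel,
      show z - y = -(y - z) by abel, inner_neg_neg]
  have hn : ‖z - y‖ = ‖y - z‖ := norm_sub_rev _ _
  rw [hi, hn]
  linarith [hnorm ▸ h]

/-- lower (subgradient) bound on the Moreau envelope -/
lemma env_lower {n : ℕ} {g : Eucl n → EReal} {γ : ℝ} {p : Eucl n → Eucl n}
    (hg : ProperLscConvex g) (hγ : 0 < γ) (hp : IsProx γ g p) (hfin : ∀ y, g (p y) ≠ ⊤)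
    (y z : Eucl n) :
    (g (p y)).toReal + ‖p y - y‖ ^ 2 / (2 * γ) + ⟪(1 / γ) • (y - p y), z - y⟫
      ≤ (g (p z)).toReal + ‖p z - z‖ ^ 2 / (2 * γ) := by
  set a : Eucl n := y - p y with ha
  set b : Eucl n := z - p z with hb
  have key := prox_subgrad hg hγ hp hfin y (p z) (hfin z)
  have hd : p z - p y = (z - y) + (a - b) := by rw [ha, hb]; abel
  have hinner : ⟪a, p z - p y⟫ = ⟪a, z - y⟫ + ‖a‖ ^ 2 - ⟪a, b⟫ := by
    simp only [hd, inner_add_right, inner_sub_right, real_inner_self_eq_norm_sq]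
    ring
  have hexp : ‖a - b‖ ^ 2 = ‖a‖ ^ 2 - 2 * ⟪a, b⟫ + ‖b‖ ^ 2 := norm_sub_sq_real _ _
  have h0 : (0:ℝ) ≤ ‖a - b‖ ^ 2 := sq_nonneg _
  have k1 : (⟪a, z - y⟫ + ‖a‖ ^ 2 - ⟪a, b⟫) / γ ≤ (g (p z)).toReal - (g (p y)).toReal := by
    rw [div_le_iff₀ hγ]
    rw [← ha] at key
    nlinarith [key, hinner]
  have k2 : (1 / γ) * ⟪a, z - y⟫ + ‖a‖ ^ 2 / (2 * γ) - ‖b‖ ^ 2 / (2 * γ)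
      ≤ (⟪a, z - y⟫ + ‖a‖ ^ 2 - ⟪a, b⟫) / γ := by
    rw [← sub_nonneg]
    have heq : (⟪a, z - y⟫ + ‖a‖ ^ 2 - ⟪a, b⟫) / γ
        - ((1 / γ) * ⟪a, z - y⟫ + ‖a‖ ^ 2 / (2 * γ) - ‖b‖ ^ 2 / (2 * γ))
        = ‖a - b‖ ^ 2 / (2 * γ) := by
      rw [hexp]; ring
    rw [heq]
    positivity
  have hna : ‖p y - y‖ = ‖a‖ := by rw [ha, norm_sub_rev]
  have hnb : ‖p z - z‖ = ‖b‖ := by rw [hb, norm_sub_rev]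
  have hsm : ⟪(1 / γ) • (y - p y), z - y⟫ = (1 / γ) * ⟪a, z - y⟫ := by
    rw [← ha, real_inner_smul_left]
  rw [hna, hnb, hsm]
  linarith

/-- convexity of the Moreau envelope -/
lemma env_convex {n : ℕ} {g : Eucl n → EReal} {γ : ℝ} {p : Eucl n → Eucl n}
    (hg : ProperLscConvex g) (hγ : 0 < γ) (hp : IsProx γ g p) (hfin : ∀ y, g (p y) ≠ ⊤)
    (y z : Eucl n) (a b : ℝ) (ha : 0 ≤ a) (hb : 0 ≤ b) (hab : a + b = 1) :
    (g (p (a • y + b • z))).toReal + ‖p (a • y + b • z) - (a • y + b • z)‖ ^ 2 / (2 * γ)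
      ≤ a * ((g (p y)).toReal + ‖p y - y‖ ^ 2 / (2 * γ))
        + b * ((g (p z)).toReal + ‖p z - z‖ ^ 2 / (2 * γ)) := by
  have hgb := hg.2.1
  have hconv := g_conv_real hg (x := p y) (y := p z) (hfin y) (hfin z) ha hb hab
  have hprox := prox_real hgb hp hfin (a • y + b • z) (a • p y + b • p z) hconv.1
  have hdec : a • p y + b • p z - (a • y + b • z) = a • (p y - y) + b • (p z - z) := by
    rw [smul_sub, smul_sub]; abel
  have hnorm : ‖a • p y + b • p z - (a • y + b • z)‖ ^ 2
      ≤ a * ‖p y - y‖ ^ 2 + b * ‖p z - z‖ ^ 2 := by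
    rw [hdec, norm_comb _ _ a b hab]
    nlinarith [mul_nonneg (mul_nonneg ha hb) (sq_nonneg ‖(p y - y) - (p z - z)‖)]
  have hmono : ‖a • p y + b • p z - (a • y + b • z)‖ ^ 2 / (2 * γ)
      ≤ a * (‖p y - y‖ ^ 2 / (2 * γ)) + b * (‖p z - z‖ ^ 2 / (2 * γ)) := by
    rw [← sub_nonneg]
    have : a * (‖p y - y‖ ^ 2 / (2 * γ)) + b * (‖p z - z‖ ^ 2 / (2 * γ))
        - ‖a • p y + b • p z - (a • y + b • z)‖ ^ 2 / (2 * γ)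
        = (a * ‖p y - y‖ ^ 2 + b * ‖p z - z‖ ^ 2
            - ‖a • p y + b • p z - (a • y + b • z)‖ ^ 2) / (2 * γ) := by ring
    rw [this]
    have h2γ : (0:ℝ) < 2 * γ := by linarith
    exact div_nonneg (by linarith) h2γ.le
  linarith [hconv.2]

/-- gradient from two-sided quadratic bounds -/
lemma squeeze_hasGradient {n : ℕ} {G : Eucl n → ℝ} {γ : ℝ} (hγ : 0 < γ) {v : Eucl n} {y : Eucl n}
    (hlow : ∀ z, G y + ⟪v, z - y⟫ ≤ G z)
    (hup : ∀ z, G z ≤ G y + ⟪v, z - y⟫ + ‖z - y‖ ^ 2 / (2 * γ)) :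
    HasGradientAt G v y := by
  rw [hasGradientAt_iff_hasFDerivAt]
  apply HasFDerivAt.of_isLittleO
  rw [Asymptotics.isLittleO_iff]
  intro c hc
  rw [Metric.eventually_nhds_iff]
  refine ⟨2 * γ * c, by positivity, fun z hz => ?_⟩
  have hdz : ‖z - y‖ < 2 * γ * c := by rw [← dist_eq_norm]; exact hz
  have htd : (InnerProductSpace.toDual ℝ (Eucl n)) v (z - y) = ⟪v, z - y⟫ :=
    InnerProductSpace.toDual_apply_apply
  have key3 : ‖z - y‖ ^ 2 / (2 * γ) ≤ c * ‖z - y‖ := by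
    rw [div_le_iff₀ (by linarith : (0:ℝ) < 2 * γ)]
    nlinarith [norm_nonneg (z - y)]
  have h1 := hlow z
  have h2 := hup z
  rw [htd, Real.norm_eq_abs, abs_le]
  constructor
  · have : 0 ≤ c * ‖z - y‖ := mul_nonneg hc.le (norm_nonneg _)
    linarith
  · linarith

lemma affine_comp_gradient {n : ℕ} (Q : Eucl n →L[ℝ] Eucl n) (q : Eucl n) (γ : ℝ)
    (hQsymm : ∀ u v : Eucl n, ⟪Q u, v⟫ = ⟪u, Q v⟫)
    (G : Eucl n → ℝ) (v : Eucl n → Eucl n)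
    (hG : ∀ y, HasGradientAt G (v y) y) (x : Eucl n) :
    HasGradientAt (fun x => G (x - γ • (Q x + q)))
      ((ContinuousLinearMap.id ℝ (Eucl n) - γ • Q) (v (x - γ • (Q x + q)))) x := by
  have hT : HasFDerivAt (fun x : Eucl n => x - γ • (Q x + q))
      (ContinuousLinearMap.id ℝ (Eucl n) - γ • Q) x :=
    (hasFDerivAt_id x).sub (((Q.hasFDerivAt).add_const q).const_smul γ)
  have hcomp := (hG (x - γ • (Q x + q))).hasFDerivAt.comp x hT
  rw [hasGradientAt_iff_hasFDerivAt]
  refine HasFDerivAt.congr_fderiv hcomp ?_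
  ext w
  simp only [ContinuousLinearMap.comp_apply, InnerProductSpace.toDual_apply_apply,
    ContinuousLinearMap.sub_apply, ContinuousLinearMap.smul_apply,
    ContinuousLinearMap.id_apply, ContinuousLinearMap.coe_sub', Pi.sub_apply,
    inner_sub_left, inner_sub_right, real_inner_smul_left, real_inner_smul_right]
  rw [hQsymm]

lemma quad_gradient {n : ℕ} (Q : Eucl n →L[ℝ] Eucl n) (q : Eucl n) (γ : ℝ)
    (hQsymm : ∀ u v : Eucl n, ⟪Q u, v⟫ = ⟪u, Q v⟫) (x : Eucl n) :
    HasGradientAt (fun x : Eucl n => ((1:ℝ) / 2 * ⟪x, Q x⟫ + ⟪q, x⟫) - γ / 2 * ‖Q x + q‖ ^ 2)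
      ((Q x + q) - γ • (Q (Q x + q))) x := by
  have h1 := (hasFDerivAt_id x).inner ℝ (Q.hasFDerivAt)
  have h2 := (hasFDerivAt_const q x).inner ℝ (hasFDerivAt_id x)
  have h3 := ((Q.hasFDerivAt (x := x)).add_const q).norm_sq
  have hsum := ((h1.const_mul ((1:ℝ)/2)).add h2).sub (h3.const_mul (γ/2))
  rw [hasGradientAt_iff_hasFDerivAt]
  refine HasFDerivAt.congr_fderiv hsum ?_
  ext w
  simp only [ContinuousLinearMap.comp_apply, InnerProductSpace.toDual_apply_apply,
    ContinuousLinearMap.sub_apply, ContinuousLinearMap.add_apply,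
    ContinuousLinearMap.smul_apply, ContinuousLinearMap.prod_apply,
    ContinuousLinearMap.id_apply, ContinuousLinearMap.zero_apply,
    fderivInnerCLM_apply, innerSL_apply_apply, smul_eq_mul,
    inner_sub_left, inner_add_left, inner_add_right, real_inner_smul_left,
    inner_zero_left, two_smul, id_eq]
  have e1 : ⟪x, Q w⟫ = ⟪Q x, w⟫ := (hQsymm x w).symm
  have e2 : ⟪w, Q x⟫ = ⟪Q x, w⟫ := real_inner_comm _ _
  have e3 : ⟪Q x, Q w⟫ + ⟪q, Q w⟫ = ⟪Q (Q x + q), w⟫ := by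
    rw [← inner_add_left, hQsymm]
  linear_combination (1/2) * e1 + (1/2) * e2 - γ * e3


lemma sq_le_sq_imp_le (r s : ℝ) (hs : 0 ≤ s) (h : r ^ 2 ≤ s ^ 2) : r ≤ s := by
  nlinarith

/-- convex combination identity for a symmetric bilinear form -/
lemma bilin_comb {n : ℕ} (Q : Eucl n →L[ℝ] Eucl n)
    (hQsymm : ∀ u v : Eucl n, ⟪Q u, v⟫ = ⟪u, Q v⟫)
    (x y : Eucl n) (a b : ℝ) (hab : a + b = 1) :
    ⟪a • x + b • y, Q (a • x + b • y)⟫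
      = a * ⟪x, Q x⟫ + b * ⟪y, Q y⟫ - a * b * ⟪x - y, Q (x - y)⟫ := by
  have hb : b = 1 - a := by linarith
  subst hb
  have h1 : ⟪y, Q x⟫ = ⟪x, Q y⟫ := by rw [← hQsymm, real_inner_comm]
  simp only [map_add, map_sub, map_smul, inner_add_left, inner_add_right,
    inner_sub_left, inner_sub_right, real_inner_smul_left, real_inner_smul_right, h1]
  ring



set_option maxHeartbeats 2000000 in
/-- If `f(x) = ½⟪x, Qx⟫ + ⟪q, x⟫` with `Q` symmetric psd, `μ ‖x‖² ≤ ⟪Qx,x⟫ ≤ L ‖x‖²`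
(`μ = λ_min(Q)`, `L = λ_max(Q)`), and `γ ∈ (0, 1/L)`, then `F_γ` is strongly convex with
modulus `min{(1-γμ)μ, (1-γL)L}` and `∇F_γ` is Lipschitz with constant `2(1-γμ)/γ`. -/
theorem fbe_quadratic_strongly_convex {n : ℕ}
    (Q : Eucl n →L[ℝ] Eucl n) (q : Eucl n) (μ L : ℝ)
    (g : Eucl n → EReal) (γ : ℝ) (p : Eucl n → Eucl n)
    (hQsymm : ∀ u v : Eucl n, ⟪Q u, v⟫ = ⟪u, Q v⟫)
    (hμ0 : 0 ≤ μ)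
    (hμ : ∀ x : Eucl n, μ * ‖x‖ ^ 2 ≤ ⟪Q x, x⟫)
    (hL : ∀ x : Eucl n, ⟪Q x, x⟫ ≤ L * ‖x‖ ^ 2)
    (hg : ProperLscConvex g)
    (hγ : 0 < γ) (hγL : γ < 1 / L)
    (hp : IsProx γ g p)
    (hfin : ∀ y, g (p y) ≠ ⊤) :
    -- with `f x = ½⟪x,Qx⟫ + ⟪q,x⟫`, `∇f x = Q x + q` and
    -- `F_γ x = f x - (γ/2)‖∇f x‖² + g^γ(x - γ∇f x)`:
    StrongConvexOn Set.univ (min ((1 - γ * μ) * μ) ((1 - γ * L) * L))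
      (fun x : Eucl n =>
        ((1 : ℝ) / 2 * ⟪x, Q x⟫ + ⟪q, x⟫) - γ / 2 * ‖Q x + q‖ ^ 2
          + ((g (p (x - γ • (Q x + q)))).toReal
              + ‖p (x - γ • (Q x + q)) - (x - γ • (Q x + q))‖ ^ 2 / (2 * γ))) ∧
    ∃ Fγ' : Eucl n → Eucl n,
      (∀ x : Eucl n, HasGradientAt
        (fun x : Eucl n =>
          ((1 : ℝ) / 2 * ⟪x, Q x⟫ + ⟪q, x⟫) - γ / 2 * ‖Q x + q‖ ^ 2
            + ((g (p (x - γ • (Q x + q)))).toReal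
                + ‖p (x - γ • (Q x + q)) - (x - γ • (Q x + q))‖ ^ 2 / (2 * γ)))
        (Fγ' x) x) ∧
      LipschitzWith (2 * (1 - γ * μ) / γ).toNNReal Fγ' := by
  have hgb := hg.2.1
  constructor
  · -- strong convexity
    refine ⟨convex_univ, ?_⟩
    intro x _ y _ a b ha hb hab
    simp only [smul_eq_mul]
    have hTcomb : a • x + b • y - γ • (Q (a • x + b • y) + q)
        = a • (x - γ • (Q x + q)) + b • (y - γ • (Q y + q)) := by
      have hq : q = a • q + b • q := by rw [← add_smul, hab, one_smul]
      rw [map_add, map_smul, map_smul]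
      nth_rewrite 1 [hq]
      module
    rw [hTcomb]
    have hGc := env_convex hg hγ hp hfin (x - γ • (Q x + q)) (y - γ • (Q y + q)) a b ha hb hab
    have t1 := bilin_comb Q hQsymm x y a b hab
    have t2 : ⟪q, a • x + b • y⟫ = a * ⟪q, x⟫ + b * ⟪q, y⟫ := by
      rw [inner_add_right, real_inner_smul_right, real_inner_smul_right]
    have haff : Q (a • x + b • y) + q = a • (Q x + q) + b • (Q y + q) := by
      rw [map_add, map_smul, map_smul]
      have h' : a • (Q x + q) + b • (Q y + q) = a • Q x + b • Q y + (a + b) • q := by module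
      rw [h', hab, one_smul]
    have t3 : ‖Q (a • x + b • y) + q‖ ^ 2
        = a * ‖Q x + q‖ ^ 2 + b * ‖Q y + q‖ ^ 2 - a * b * ‖Q (x - y)‖ ^ 2 := by
      rw [haff, norm_comb _ _ a b hab]
      have h' : Q x + q - (Q y + q) = Q (x - y) := by rw [map_sub]; abel
      rw [h']
    have t3' : γ / 2 * ‖Q (a • x + b • y) + q‖ ^ 2
        = γ / 2 * (a * ‖Q x + q‖ ^ 2 + b * ‖Q y + q‖ ^ 2 - a * b * ‖Q (x - y)‖ ^ 2) := by
      rw [t3]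
    have hmod := modulus_bound Q μ L γ hQsymm hμ hL hγ.le (x - y)
    rw [real_inner_comm (x - y) (Q (x - y))] at hmod
    have hab2 : (0:ℝ) ≤ a * b / 2 := by
      have := mul_nonneg ha hb; linarith
    have hmodab := mul_le_mul_of_nonneg_left hmod hab2
    linarith [hGc, t1, t2, t3', hmodab]
  · -- gradient and Lipschitz constant
    refine ⟨fun x => (1 / γ) • ((ContinuousLinearMap.id ℝ (Eucl n) - γ • Q)
        (x - p (x - γ • (Q x + q)))), ?_, ?_⟩
    · intro x
      have hGrad : ∀ y : Eucl n, HasGradientAt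
          (fun z => (g (p z)).toReal + ‖p z - z‖ ^ 2 / (2 * γ)) ((1 / γ) • (y - p y)) y :=
        fun y => squeeze_hasGradient hγ (fun z => env_lower hg hγ hp hfin y z)
          (fun z => env_upper hgb hγ hp hfin y z)
      have h1 := quad_gradient Q q γ hQsymm x
      have h2 := affine_comp_gradient Q q γ hQsymm _ _ hGrad x
      have hFD : (1 / γ) • ((ContinuousLinearMap.id ℝ (Eucl n) - γ • Q)
            (x - p (x - γ • (Q x + q))))
          = ((Q x + q) - γ • (Q (Q x + q)))
            + (ContinuousLinearMap.id ℝ (Eucl n) - γ • Q)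
              ((1 / γ) • ((x - γ • (Q x + q)) - p (x - γ • (Q x + q)))) := by
        set S : Eucl n →L[ℝ] Eucl n := ContinuousLinearMap.id ℝ (Eucl n) - γ • Q with hS
        have hSapp : ∀ d : Eucl n, S d = d - γ • Q d := by
          intro d
          simp [hS, ContinuousLinearMap.sub_apply, ContinuousLinearMap.smul_apply]
        have hdecomp : x - p (x - γ • (Q x + q))
            = γ • (Q x + q) + ((x - γ • (Q x + q)) - p (x - γ • (Q x + q))) := by abel
        rw [hdecomp, map_add, map_smul (S), smul_add, smul_smul,
          one_div_mul_cancel hγ.ne', one_smul, map_smul]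
        exact congrArg (· + (1 / γ) • S (x - γ • (Q x + q) - p (x - γ • (Q x + q))))
          (hSapp (Q x + q))
      have goalG : HasGradientAt
          (fun x : Eucl n =>
            ((1 : ℝ) / 2 * ⟪x, Q x⟫ + ⟪q, x⟫) - γ / 2 * ‖Q x + q‖ ^ 2
              + ((g (p (x - γ • (Q x + q)))).toReal
                  + ‖p (x - γ • (Q x + q)) - (x - γ • (Q x + q))‖ ^ 2 / (2 * γ)))
          ((Q x + q - γ • Q (Q x + q))
            + (ContinuousLinearMap.id ℝ (Eucl n) - γ • Q)
              ((1 / γ) • (x - γ • (Q x + q) - p (x - γ • (Q x + q))))) x := by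
        rw [hasGradientAt_iff_hasFDerivAt, map_add]
        exact h1.hasFDerivAt.add h2.hasFDerivAt
      rw [← hFD] at goalG
      exact goalG
    · -- Lipschitz
      rcases subsingleton_or_nontrivial (Eucl n) with hsub | hnt
      · apply LipschitzWith.of_dist_le_mul
        intro x y
        simp [Subsingleton.elim x y]
      · obtain ⟨e, he⟩ := exists_ne (0 : Eucl n)
        have hL0 : 0 < L := by
          by_contra hL0
          push_neg at hL0
          have h1 : 1 / L ≤ 0 := one_div_nonpos.mpr hL0
          linarith
        have hμL : μ ≤ L := by
          have h1 := hμ e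
          have h2 := hL e
          have h3 : 0 < ‖e‖ ^ 2 := by
            have := norm_pos_iff.mpr he
            positivity
          nlinarith
        have hγL1 : γ * L < 1 := (lt_div_iff₀ hL0).mp hγL
        have hγμ1 : γ * μ < 1 :=
          lt_of_le_of_lt (mul_le_mul_of_nonneg_left hμL hγ.le) hγL1
        set S : Eucl n →L[ℝ] Eucl n := ContinuousLinearMap.id ℝ (Eucl n) - γ • Q with hS
        have hSapp : ∀ d : Eucl n, S d = d - γ • Q d := by
          intro d
          simp [hS, ContinuousLinearMap.sub_apply, ContinuousLinearMap.smul_apply]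
        have hSsym : ∀ u v : Eucl n, ⟪S u, v⟫ = ⟪u, S v⟫ := by
          intro u v
          simp only [hSapp, inner_sub_left, inner_sub_right, real_inner_smul_left,
            real_inner_smul_right, hQsymm]
        have hSinner : ∀ d : Eucl n, ⟪S d, d⟫ = ‖d‖ ^ 2 - γ * ⟪Q d, d⟫ := by
          intro d
          rw [hSapp, inner_sub_left, real_inner_smul_left, real_inner_self_eq_norm_sq]
        have hS0 : ∀ d : Eucl n, 0 ≤ ⟪S d, d⟫ := by
          intro d
          rw [hSinner]
          have e1 := mul_le_mul_of_nonneg_left (hL d) hγ.le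
          have e2 : 0 ≤ (1 - γ * L) * ‖d‖ ^ 2 :=
            mul_nonneg (by linarith) (sq_nonneg _)
          nlinarith
        have hSM : ∀ d : Eucl n, ⟪S d, d⟫ ≤ (1 - γ * μ) * ‖d‖ ^ 2 := by
          intro d
          rw [hSinner]
          have e1 := mul_le_mul_of_nonneg_left (hμ d) hγ.le
          nlinarith
        have h1γμ : (0:ℝ) ≤ 1 - γ * μ := by linarith
        have hSb : ∀ d : Eucl n, ‖S d‖ ≤ (1 - γ * μ) * ‖d‖ := by
          intro d
          have h1 := psd_norm_sq_le S hSsym hS0 (1 - γ * μ) hSM d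
          have h4 := mul_le_mul_of_nonneg_left (hSM d) h1γμ
          have h5 : ((1 - γ * μ) * ‖d‖) ^ 2 = (1 - γ * μ) * ((1 - γ * μ) * ‖d‖ ^ 2) := by ring
          exact sq_le_sq_imp_le _ _ (mul_nonneg h1γμ (norm_nonneg d)) (by linarith)
        apply LipschitzWith.of_dist_le_mul
        intro x y
        rw [dist_eq_norm, dist_eq_norm]
        have hcoe : ((2 * (1 - γ * μ) / γ).toNNReal : ℝ) = 2 * (1 - γ * μ) / γ :=
          Real.coe_toNNReal _ (div_nonneg (by linarith) hγ.le)
        rw [hcoe]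
        have hdiff : (1 / γ) • (S (x - p (x - γ • (Q x + q))))
              - (1 / γ) • (S (y - p (y - γ • (Q y + q))))
            = (1 / γ) • S ((x - y) - (p (x - γ • (Q x + q)) - p (y - γ • (Q y + q)))) := by
          rw [← smul_sub, ← map_sub]
          congr 2
          abel
        have hTxy : (x - γ • (Q x + q)) - (y - γ • (Q y + q)) = S (x - y) := by
          rw [hSapp, map_sub Q x y, smul_sub γ (Q x) (Q y), smul_add γ (Q x) q,
            smul_add γ (Q y) q]
          abel
        have hne := prox_nonexpansive hg hγ hp hfin (x - γ • (Q x + q)) (y - γ • (Q y + q))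
        rw [hTxy] at hne
        have hb1 : ‖S (x - y)‖ ≤ (1 - γ * μ) * ‖x - y‖ := hSb (x - y)
        have hb2 : ‖p (x - γ • (Q x + q)) - p (y - γ • (Q y + q))‖ ≤ ‖x - y‖ := by
          have : (1 - γ * μ) * ‖x - y‖ ≤ ‖x - y‖ := by
            nlinarith [norm_nonneg (x - y), mul_nonneg hγ.le hμ0]
          linarith
        have hb3 : ‖(x - y) - (p (x - γ • (Q x + q)) - p (y - γ • (Q y + q)))‖
            ≤ 2 * ‖x - y‖ := by
          have := norm_sub_le (x - y) (p (x - γ • (Q x + q)) - p (y - γ • (Q y + q)))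
          linarith
        have hb4 := hSb ((x - y) - (p (x - γ • (Q x + q)) - p (y - γ • (Q y + q))))
        rw [hdiff, norm_smul, Real.norm_eq_abs, abs_of_pos (by positivity : (0:ℝ) < 1/γ)]
        have hfin2 : (1/γ) * ((1 - γ * μ) * (2 * ‖x - y‖)) = 2 * (1 - γ * μ) / γ * ‖x - y‖ := by
          field_simp
        have hmono : (1 - γ * μ) * ‖(x - y) - (p (x - γ • (Q x + q)) - p (y - γ • (Q y + q)))‖
            ≤ (1 - γ * μ) * (2 * ‖x - y‖) :=
          mul_le_mul_of_nonneg_left hb3 (by linarith)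
        have hstep : (1/γ) * ‖S ((x - y) - (p (x - γ • (Q x + q)) - p (y - γ • (Q y + q))))‖
            ≤ (1/γ) * ((1 - γ * μ) * (2 * ‖x - y‖)) := by
          apply mul_le_mul_of_nonneg_left _ (by positivity)
          linarith
        linarith [hfin2 ▸ hstep]
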